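/- Let $I, J$ be homogeneous ideals in the free algebra $\mathbb{C}\langle z_1,\dots,z_d\rangle$. Then $\mathbb{C}\langle z\rangle/I$ and $\mathbb{C}\langle z\rangle/J$ are isomorphic as algebras if and only if there exist free polynomial maps $F, G$ (tuples of elements of $\mathbb{C}\langle z\rangle$) that restrict to mutually inverse bijections between the matrix zero sets $Z(J)$ and $Z(I)$, where $Z(K)$ is the set of $d$-tuples of matrices (of all sizes) annihilated by every element of $K$. -/

import Mathlib

/-- Evaluation of a free polynomial at a `d`-tuple of `n × n` matrices. -/
noncomputable def freeEvalMat {d n : ℕ} (X : Fin d → Matrix (Fin n) (Fin n) ℂ)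
    (p : FreeAlgebra ℂ (Fin d)) : Matrix (Fin n) (Fin n) ℂ :=
  FreeAlgebra.lift ℂ X p

/-- The submodule of `n`-homogeneous elements of the free algebra `ℂ⟨z₁,…,z_d⟩`. -/
noncomputable def homogComponent (d : ℕ) (k : ℕ) : Submodule ℂ (FreeAlgebra ℂ (Fin d)) :=
  (Submodule.span ℂ (Set.range (FreeAlgebra.ι ℂ : Fin d → FreeAlgebra ℂ (Fin d)))) ^ k

/-- A two-sided ideal of the free algebra is homogeneous if it is generated by homogeneous
elements. -/
def IsHomogeneousTwoSidedIdeal {d : ℕ} (I : TwoSidedIdeal (FreeAlgebra ℂ (Fin d))) : Prop :=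
  ∃ S : Set (FreeAlgebra ℂ (Fin d)),
    (∀ x ∈ S, ∃ k, x ∈ homogComponent d k) ∧ I = TwoSidedIdeal.span S

/-- `X` belongs to the matrix zero set `Z(K)` of a two-sided ideal
`K ⊴ ℂ⟨z₁,…,z_d⟩`. -/
def MemFreeZeroSet {d : ℕ} (K : TwoSidedIdeal (FreeAlgebra ℂ (Fin d))) {n : ℕ}
    (X : Fin d → Matrix (Fin n) (Fin n) ℂ) : Prop :=
  ∀ p ∈ K, freeEvalMat X p = 0

set_option maxHeartbeats 1000000
set_option synthInstance.maxHeartbeats 400000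
set_option linter.unnecessarySimpa false

noncomputable section
open DirectSum

namespace FNull


variable {d : ℕ}

abbrev FA (d : ℕ) := FreeAlgebra ℂ (Fin d)

lemma homog_eq_pow (d : ℕ) : homogComponent d =
    fun k => (Submodule.span ℂ (Set.range (FreeAlgebra.ι ℂ : Fin d → FA d))) ^ k := rfl

instance : SetLike.GradedMonoid (homogComponent d) :=
  Submodule.nat_power_gradedMonoid _

lemma ι_mem_one (x : Fin d) : FreeAlgebra.ι ℂ x ∈ homogComponent d 1 := by
  rw [homogComponent, pow_one]
  exact Submodule.subset_span ⟨x, rfl⟩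

/-- degree-1 part map into the direct sum -/
noncomputable def gι (x : Fin d) : ⨁ i, ↥(homogComponent d i) :=
  DirectSum.of (fun i => ↥(homogComponent d i)) 1 ⟨FreeAlgebra.ι ℂ x, ι_mem_one x⟩

noncomputable def dec : FA d →ₐ[ℂ] ⨁ i, ↥(homogComponent d i) :=
  FreeAlgebra.lift ℂ gι

lemma dec_of_mem_one {m : FA d} (hm : m ∈ homogComponent d 1) :
    dec m = DirectSum.of (fun i => ↥(homogComponent d i)) 1 ⟨m, hm⟩ := by
  rw [homogComponent, pow_one] at hm
  induction hm using Submodule.span_induction with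
  | mem x hx =>
    obtain ⟨i, rfl⟩ := hx
    rw [dec, FreeAlgebra.lift_ι_apply]
    rfl
  | zero =>
    rw [map_zero]
    exact (map_zero (DirectSum.of (fun i => ↥(homogComponent d i)) 1)).symm
  | add x y hx hy ihx ihy =>
    rw [map_add, ihx (by rwa [homogComponent, pow_one]), ihy (by rwa [homogComponent, pow_one]),
      ← map_add]
    rfl
  | smul c x hx ihx =>
    rw [map_smul, ihx (by rwa [homogComponent, pow_one])]
    rw [← DirectSum.lof_eq_of ℂ, ← map_smul]
    rfl

noncomputable instance gradedAlgebra : GradedAlgebra (homogComponent d) :=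
  GradedAlgebra.ofAlgHom _ dec
    (by
      apply FreeAlgebra.hom_ext
      funext x
      simp only [Function.comp_apply, AlgHom.comp_apply, AlgHom.id_apply]
      rw [dec, FreeAlgebra.lift_ι_apply, gι, DirectSum.coeAlgHom_of])
    (fun i x => by
      obtain ⟨x, hx⟩ := x
      dsimp only
      rw [homog_eq_pow] at hx
      induction hx using Submodule.pow_induction_on_left' with
      | algebraMap r =>
        rw [AlgHom.commutes, DirectSum.algebraMap_apply]; rfl
      | add x y i hx1 hy1 ihx ihy =>
        rw [map_add, ihx hx1, ihy hy1, ← AddMonoidHom.map_add]; rfl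
      | mem_mul m hm i x hx1 ih =>
        rw [map_mul, ih hx1, dec_of_mem_one (by rw [homogComponent, pow_one]; exact hm),
          DirectSum.of_mul_of]
        exact DirectSum.of_eq_of_gradedMonoid_eq (Sigma.subtype_ext (add_comm _ _) rfl))




variable {d : ℕ}

noncomputable instance (priority := high) : ∀ (i : ℕ) (x : ↥(homogComponent d i)), Decidable (x ≠ 0) :=
  fun _ _ => Classical.dec _

lemma decompose_mul3_eq (k : ℕ) (a b : FA d) {m : ℕ} {s : FA d} (hs : s ∈ homogComponent d m) :
    ((DirectSum.decompose (homogComponent d) (a * s * b) k : homogComponent d k) : FA d) =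
      ∑ j ∈ (DirectSum.decompose (homogComponent d) a).support,
        ∑ l ∈ (DirectSum.decompose (homogComponent d) b).support,
          if j + (m + l) = k then
            ((DirectSum.decompose (homogComponent d) a j : homogComponent d j) : FA d) *
              (s * ((DirectSum.decompose (homogComponent d) b l : homogComponent d l) : FA d))
          else 0 := by
  classical
  conv_lhs => rw [← DirectSum.sum_support_decompose (homogComponent d) a,
    ← DirectSum.sum_support_decompose (homogComponent d) b]
  rw [Finset.sum_mul, Finset.sum_mul, DirectSum.decompose_sum, DFinsupp.finset_sum_apply,
    AddSubmonoidClass.coe_finset_sum]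
  refine Finset.sum_congr rfl fun j _ => ?_
  rw [Finset.mul_sum, DirectSum.decompose_sum, DFinsupp.finset_sum_apply,
    AddSubmonoidClass.coe_finset_sum]
  refine Finset.sum_congr rfl fun l _ => ?_
  rw [mul_assoc]
  have ht : ((DirectSum.decompose (homogComponent d) a j : homogComponent d j) : FA d) *
      (s * ((DirectSum.decompose (homogComponent d) b l : homogComponent d l) : FA d)) ∈
      homogComponent d (j + (m + l)) :=
    SetLike.mul_mem_graded (SetLike.coe_mem _)
      (SetLike.mul_mem_graded hs (SetLike.coe_mem _))
  by_cases h : j + (m + l) = k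
  · rw [if_pos h, DirectSum.decompose_of_mem_same (homogComponent d) (h ▸ ht)]
  · rw [if_neg h, DirectSum.decompose_of_mem_ne (homogComponent d) ht h]

lemma proj_span_mem {N k : ℕ} (hk : k ≤ N) {S : Set (FA d)}
    (hS : ∀ s ∈ S, ∃ m, s ∈ homogComponent d m) {p : FA d}
    (hp : p ∈ TwoSidedIdeal.span (S ∪ (homogComponent d (N + 1) : Set (FA d)))) :
    ((DirectSum.decompose (homogComponent d) p k : homogComponent d k) : FA d) ∈
      TwoSidedIdeal.span S := by
  classical
  rw [TwoSidedIdeal.mem_span_iff_mem_addSubgroup_closure] at hp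
  induction hp using AddSubgroup.closure_induction with
  | mem x hx =>
    obtain ⟨-, ⟨a, -, s, hs, rfl⟩, b, -, rfl⟩ := hx
    rcases hs with hs | hs
    · obtain ⟨m, hm⟩ := hS s hs
      rw [decompose_mul3_eq k a b hm]
      refine sum_mem fun j _ => sum_mem fun l _ => ?_
      split
      · exact TwoSidedIdeal.mul_mem_left _ _ _
          (TwoSidedIdeal.mul_mem_right _ _ _ (TwoSidedIdeal.subset_span hs))
      · exact (TwoSidedIdeal.span S).zero_mem
    · rw [decompose_mul3_eq k a b (SetLike.mem_coe.mp hs)]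
      refine sum_mem fun j _ => sum_mem fun l _ => ?_
      rw [if_neg (by omega)]
      exact (TwoSidedIdeal.span S).zero_mem
  | zero =>
    rw [DirectSum.decompose_zero]
    simpa using (TwoSidedIdeal.span S).zero_mem
  | add x y hx hy ihx ihy =>
    rw [DirectSum.decompose_add]
    simpa using (TwoSidedIdeal.span S).add_mem ihx ihy
  | neg x hx ihx =>
    rw [DirectSum.decompose_neg]
    have h1 : ((-(DirectSum.decompose (homogComponent d) x)) k : homogComponent d k) =
        -((DirectSum.decompose (homogComponent d) x) k) := rfl
    rw [h1]
    exact (TwoSidedIdeal.span S).neg_mem ihx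


def tsiSubmodule (K : TwoSidedIdeal (FA d)) : Submodule ℂ (FA d) where
  carrier := K
  add_mem' := K.add_mem
  zero_mem' := K.zero_mem
  smul_mem' := fun c x hx => by
    rw [Algebra.smul_def]; exact K.mul_mem_left _ _ hx

lemma mem_tsiSubmodule {K : TwoSidedIdeal (FA d)} {x : FA d} :
    x ∈ tsiSubmodule K ↔ x ∈ K := Iff.rfl

noncomputable def lmulQ (L : TwoSidedIdeal (FA d)) (a : FA d) :
    (FA d ⧸ tsiSubmodule L) →ₗ[ℂ] (FA d ⧸ tsiSubmodule L) :=
  Submodule.mapQ _ _ (LinearMap.mul ℂ (FA d) a)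
    (fun x hx => L.mul_mem_left a x hx)

lemma lmulQ_mk (L : TwoSidedIdeal (FA d)) (a x : FA d) :
    lmulQ L a (Submodule.Quotient.mk x) = Submodule.Quotient.mk (a * x) :=
  Submodule.mapQ_apply _ _ _ x

noncomputable def rho (L : TwoSidedIdeal (FA d)) :
    FA d →ₐ[ℂ] Module.End ℂ (FA d ⧸ tsiSubmodule L) where
  toFun := lmulQ L
  map_one' := by
    apply LinearMap.ext; intro q
    obtain ⟨x, rfl⟩ := Submodule.Quotient.mk_surjective _ q
    rw [lmulQ_mk, one_mul]; rfl
  map_mul' := fun a b => by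
    apply LinearMap.ext; intro q
    obtain ⟨x, rfl⟩ := Submodule.Quotient.mk_surjective _ q
    show lmulQ L (a * b) (Submodule.Quotient.mk x) = lmulQ L a (lmulQ L b (Submodule.Quotient.mk x))
    rw [lmulQ_mk, lmulQ_mk, lmulQ_mk, mul_assoc]
  map_zero' := by
    apply LinearMap.ext; intro q
    obtain ⟨x, rfl⟩ := Submodule.Quotient.mk_surjective _ q
    rw [lmulQ_mk, zero_mul]; rfl
  map_add' := fun a b => by
    apply LinearMap.ext; intro q
    obtain ⟨x, rfl⟩ := Submodule.Quotient.mk_surjective _ q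
    show lmulQ L (a + b) (Submodule.Quotient.mk x)
      = lmulQ L a (Submodule.Quotient.mk x) + lmulQ L b (Submodule.Quotient.mk x)
    rw [lmulQ_mk, lmulQ_mk, lmulQ_mk, add_mul]
    exact congrArg _ rfl
  commutes' := fun c => by
    apply LinearMap.ext; intro q
    obtain ⟨x, rfl⟩ := Submodule.Quotient.mk_surjective _ q
    show lmulQ L (algebraMap ℂ (FA d) c) (Submodule.Quotient.mk x)
      = algebraMap ℂ (Module.End ℂ (FA d ⧸ tsiSubmodule L)) c (Submodule.Quotient.mk x)
    rw [lmulQ_mk, Module.algebraMap_end_apply, ← Algebra.smul_def]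
    exact (Submodule.Quotient.mk_smul _ _ _)

lemma homog_add (a b : ℕ) :
    homogComponent d (a + b) = homogComponent d a * homogComponent d b :=
  pow_add _ a b

lemma iSup_homog : (⨆ k, homogComponent d k) = (⊤ : Submodule ℂ (FA d)) :=
  (DirectSum.Decomposition.isInternal (homogComponent d)).submodule_iSup_eq_top

lemma homog_fg (k : ℕ) : (homogComponent d k).FG := by
  rw [homog_eq_pow]
  exact (Submodule.fg_span (Set.finite_range _)).pow k

lemma finite_quotient (L : TwoSidedIdeal (FA d)) (N : ℕ)
    (hN : (homogComponent d (N + 1) : Set (FA d)) ⊆ L) :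
    Module.Finite ℂ (FA d ⧸ tsiSubmodule L) := by
  classical
  set W : Submodule ℂ (FA d) := (Finset.range (N + 1)).sup (homogComponent d) with hW
  have hWfg : W.FG := by
    rw [hW]
    refine Finset.sup_induction ?_ (fun a ha b hb => Submodule.FG.sup ha hb) ?_
    · exact Submodule.fg_bot
    · exact fun k _ => homog_fg k
  have htop : W ⊔ tsiSubmodule L = ⊤ := by
    rw [eq_top_iff, ← iSup_homog]
    refine iSup_le fun k => ?_
    rcases le_or_gt k N with hk | hk
    · exact le_trans (Finset.le_sup (Finset.mem_range.mpr (by omega))) le_sup_left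
    · refine le_trans ?_ le_sup_right
      have hk' : k = (N + 1) + (k - (N + 1)) := by omega
      rw [hk', homog_add]
      refine Submodule.mul_le.mpr fun a ha b hb => ?_
      exact L.mul_mem_right _ _ (hN ha)
  have hmap : Submodule.map (tsiSubmodule L).mkQ W = ⊤ := by
    have h1 : Submodule.map (tsiSubmodule L).mkQ (tsiSubmodule L) = ⊥ := by
      rw [eq_bot_iff]
      rintro y ⟨x, hx, rfl⟩
      simpa [Submodule.mem_bot, Submodule.mkQ_apply, Submodule.Quotient.mk_eq_zero] using hx
    have := congrArg (Submodule.map (tsiSubmodule L).mkQ) htop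
    rwa [Submodule.map_sup, h1, sup_bot_eq, Submodule.map_top, Submodule.range_mkQ] at this
  rw [Module.finite_def, ← hmap]
  exact hWfg.map _

theorem mem_of_vanishing {K : TwoSidedIdeal (FA d)} (hK : IsHomogeneousTwoSidedIdeal K)
    {p : FA d}
    (hp : ∀ (n : ℕ) (X : Fin d → Matrix (Fin n) (Fin n) ℂ), MemFreeZeroSet K X →
      freeEvalMat X p = 0) : p ∈ K := by
  classical
  obtain ⟨S, hS, rfl⟩ := hK
  set N : ℕ := (DirectSum.decompose (homogComponent d) p).support.sup id with hN
  set L : TwoSidedIdeal (FA d) :=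
    TwoSidedIdeal.span (S ∪ (homogComponent d (N + 1) : Set (FA d))) with hL
  have hfin : Module.Finite ℂ (FA d ⧸ tsiSubmodule L) :=
    finite_quotient L N (fun x hx => TwoSidedIdeal.subset_span (Set.mem_union_right _ hx))
  set n : ℕ := Module.finrank ℂ (FA d ⧸ tsiSubmodule L) with hn
  set b : Module.Basis (Fin n) ℂ (FA d ⧸ tsiSubmodule L) := Module.finBasis ℂ _ with hb
  set μ : FA d →ₐ[ℂ] Matrix (Fin n) (Fin n) ℂ :=
    (algEquivMatrix b).toAlgHom.comp (rho L) with hμ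
  set X : Fin d → Matrix (Fin n) (Fin n) ℂ := fun i => μ (FreeAlgebra.ι ℂ i) with hX
  have hEval : ∀ q, freeEvalMat X q = μ q := by
    intro q
    have h1 : FreeAlgebra.lift ℂ X = μ := by
      apply FreeAlgebra.hom_ext; funext i
      simp only [Function.comp_apply, FreeAlgebra.lift_ι_apply, hX]
    rw [freeEvalMat, h1]
  have hrho : ∀ q : FA d, μ q = 0 ↔ rho L q = 0 := by
    intro q
    constructor
    · intro h
      apply (algEquivMatrix b).injective
      rw [map_zero]
      exact h
    · intro h
      show (algEquivMatrix b) (rho L q) = 0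
      rw [h]; exact map_zero _
  have hXL : MemFreeZeroSet L X := by
    intro q hq
    rw [hEval, hrho]
    apply LinearMap.ext; intro w
    obtain ⟨x, rfl⟩ := Submodule.Quotient.mk_surjective _ w
    show lmulQ L q (Submodule.Quotient.mk x) = 0
    rw [lmulQ_mk, Submodule.Quotient.mk_eq_zero]
    exact L.mul_mem_right _ _ hq
  have hXS : MemFreeZeroSet (TwoSidedIdeal.span S) X := fun q hq =>
    hXL q (TwoSidedIdeal.span_mono Set.subset_union_left hq)
  have hpL : p ∈ L := by
    have h0 := hp n X hXS
    rw [hEval, hrho] at h0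
    have h1 := DFunLike.congr_fun h0 (Submodule.Quotient.mk (1 : FA d))
    rw [LinearMap.zero_apply] at h1
    have h2 : lmulQ L p (Submodule.Quotient.mk 1) = 0 := h1
    rw [lmulQ_mk, mul_one] at h2
    exact (Submodule.Quotient.mk_eq_zero _).mp h2
  have hproj : ∀ k ∈ (DirectSum.decompose (homogComponent d) p).support,
      ((DirectSum.decompose (homogComponent d) p k : homogComponent d k) : FA d) ∈
        TwoSidedIdeal.span S := by
    intro k hk
    exact proj_span_mem (Finset.le_sup (f := id) hk) hS hpL
  have hsum := DirectSum.sum_support_decompose (homogComponent d) p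
  rw [← hsum]
  exact sum_mem fun k hk => hproj k hk

noncomputable def subst (F : Fin d → FA d) : FA d →ₐ[ℂ] FA d := FreeAlgebra.lift ℂ F

lemma eval_subst {n : ℕ} (X : Fin d → Matrix (Fin n) (Fin n) ℂ) (F : Fin d → FA d) (q : FA d) :
    freeEvalMat X (subst F q) = freeEvalMat (fun i => freeEvalMat X (F i)) q := by
  have h : (FreeAlgebra.lift ℂ X).comp (subst F) =
      FreeAlgebra.lift ℂ (fun i => freeEvalMat X (F i)) := by
    apply FreeAlgebra.hom_ext; funext i
    simp only [Function.comp_apply, AlgHom.comp_apply, subst, FreeAlgebra.lift_ι_apply,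
      freeEvalMat]
  calc freeEvalMat X (subst F q) = ((FreeAlgebra.lift ℂ X).comp (subst F)) q := rfl
  _ = _ := by rw [h]; rfl

lemma coe_eq_coe {K : TwoSidedIdeal (FA d)} {x y : FA d} :
    (x : K.ringCon.Quotient) = y ↔ x - y ∈ K := by
  rw [RingCon.eq, K.rel_iff]

lemma coe_zero_iff {K : TwoSidedIdeal (FA d)} {x : FA d} :
    (x : K.ringCon.Quotient) = 0 ↔ x ∈ K := by
  have h := coe_eq_coe (K := K) (x := x) (y := 0)
  rw [sub_zero] at h
  rw [← h, RingCon.coe_zero]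

noncomputable def qmap (K K' : TwoSidedIdeal (FA d)) (Φ : FA d →ₐ[ℂ] FA d)
    (h : ∀ q ∈ K, Φ q ∈ K') : K.ringCon.Quotient →+* K'.ringCon.Quotient where
  toFun := fun y => Quotient.liftOn y (fun x => ((Φ x : FA d) : K'.ringCon.Quotient))
    (fun a b hab => by
      rw [coe_eq_coe, ← map_sub]
      exact h _ ((K.rel_iff a b).mp hab))
  map_one' := by
    show ((Φ (1 : FA d) : FA d) : K'.ringCon.Quotient) = 1
    rw [map_one]; rfl
  map_mul' := fun y z => Quotient.inductionOn₂ y z (fun a b => by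
    show ((Φ (a * b) : FA d) : K'.ringCon.Quotient) = ((Φ a : FA d) : K'.ringCon.Quotient) *
      ((Φ b : FA d) : K'.ringCon.Quotient)
    rw [map_mul]
    rfl)
  map_zero' := by
    show ((Φ (0 : FA d) : FA d) : K'.ringCon.Quotient) = 0
    rw [map_zero]; rfl
  map_add' := fun y z => Quotient.inductionOn₂ y z (fun a b => by
    show ((Φ (a + b) : FA d) : K'.ringCon.Quotient) = ((Φ a : FA d) : K'.ringCon.Quotient) +
      ((Φ b : FA d) : K'.ringCon.Quotient)
    rw [map_add]
    rfl)

lemma qmap_coe (K K' : TwoSidedIdeal (FA d)) (Φ : FA d →ₐ[ℂ] FA d)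
    (h : ∀ q ∈ K, Φ q ∈ K') (x : FA d) :
    qmap K K' Φ h (x : K.ringCon.Quotient) = ((Φ x : FA d) : K'.ringCon.Quotient) := rfl


lemma eval_sub {n : ℕ} (X : Fin d → Matrix (Fin n) (Fin n) ℂ) (a b : FA d) :
    freeEvalMat X (a - b) = freeEvalMat X a - freeEvalMat X b :=
  map_sub (FreeAlgebra.lift ℂ X) a b

lemma eval_ι {n : ℕ} (X : Fin d → Matrix (Fin n) (Fin n) ℂ) (i : Fin d) :
    freeEvalMat X (FreeAlgebra.ι ℂ i) = X i := FreeAlgebra.lift_ι_apply _ _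

end FNull

open FNull in
/-- For homogeneous two-sided ideals `I, J` of `ℂ⟨z⟩`, the quotient algebras
`ℂ⟨z⟩/I` and `ℂ⟨z⟩/J` are isomorphic as `ℂ`-algebras (i.e. via a ring isomorphism
commuting with the `ℂ`-scalars) iff there are free polynomial maps `F, G` restricting to
mutually inverse bijections between `Z(J)` and `Z(I)`. -/
theorem stmt_13 {d : ℕ} (I J : TwoSidedIdeal (FreeAlgebra ℂ (Fin d)))
    (hI : IsHomogeneousTwoSidedIdeal I) (hJ : IsHomogeneousTwoSidedIdeal J) :
    (∃ e : I.ringCon.Quotient ≃+* J.ringCon.Quotient,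
      ∀ c : ℂ, e ((algebraMap ℂ (FreeAlgebra ℂ (Fin d)) c : FreeAlgebra ℂ (Fin d)) :
          I.ringCon.Quotient) =
        ((algebraMap ℂ (FreeAlgebra ℂ (Fin d)) c : FreeAlgebra ℂ (Fin d)) :
          J.ringCon.Quotient)) ↔
    ∃ F G : Fin d → FreeAlgebra ℂ (Fin d),
      (∀ (n : ℕ) (X : Fin d → Matrix (Fin n) (Fin n) ℂ), MemFreeZeroSet J X →
        MemFreeZeroSet I (fun i => freeEvalMat X (F i))) ∧
      (∀ (n : ℕ) (X : Fin d → Matrix (Fin n) (Fin n) ℂ), MemFreeZeroSet I X →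
        MemFreeZeroSet J (fun i => freeEvalMat X (G i))) ∧
      (∀ (n : ℕ) (X : Fin d → Matrix (Fin n) (Fin n) ℂ), MemFreeZeroSet J X →
        (fun i => freeEvalMat (fun i' => freeEvalMat X (F i')) (G i)) = X) ∧
      (∀ (n : ℕ) (X : Fin d → Matrix (Fin n) (Fin n) ℂ), MemFreeZeroSet I X →
        (fun i => freeEvalMat (fun i' => freeEvalMat X (G i')) (F i)) = X) := by
  constructor
  · rintro ⟨e, he⟩
    have hFex : ∀ i : Fin d, ∃ x : FA d,
        (x : J.ringCon.Quotient) =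
          e ((FreeAlgebra.ι ℂ i : FA d) : I.ringCon.Quotient) := fun i =>
      Quotient.exists_rep _
    choose F hF using hFex
    have hGex : ∀ i : Fin d, ∃ x : FA d,
        (x : I.ringCon.Quotient) =
          e.symm ((FreeAlgebra.ι ℂ i : FA d) : J.ringCon.Quotient) := fun i =>
      Quotient.exists_rep _
    choose G hG using hGex
    have he' : ∀ c : ℂ, e.symm ((algebraMap ℂ (FA d) c : FA d) : J.ringCon.Quotient) =
        ((algebraMap ℂ (FA d) c : FA d) : I.ringCon.Quotient) := by
      intro c; rw [← he c, RingEquiv.symm_apply_apply]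
    have keyF : ∀ q : FA d, ((subst F q : FA d) : J.ringCon.Quotient) =
        e ((q : FA d) : I.ringCon.Quotient) := by
      intro q
      induction q using FreeAlgebra.induction with
      | grade0 r =>
        rw [show subst F (algebraMap ℂ (FA d) r) = algebraMap ℂ (FA d) r from
          (subst F).commutes r, he r]
      | grade1 i =>
        rw [show subst F (FreeAlgebra.ι ℂ i) = F i from FreeAlgebra.lift_ι_apply _ _, hF i]
      | mul a b ha hb =>
        rw [map_mul, RingCon.coe_mul, ha, hb, RingCon.coe_mul, map_mul]
      | add a b ha hb =>
        rw [map_add, RingCon.coe_add, ha, hb, RingCon.coe_add, map_add]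
    have keyG : ∀ q : FA d, ((subst G q : FA d) : I.ringCon.Quotient) =
        e.symm ((q : FA d) : J.ringCon.Quotient) := by
      intro q
      induction q using FreeAlgebra.induction with
      | grade0 r =>
        rw [show subst G (algebraMap ℂ (FA d) r) = algebraMap ℂ (FA d) r from
          (subst G).commutes r, he' r]
      | grade1 i =>
        rw [show subst G (FreeAlgebra.ι ℂ i) = G i from FreeAlgebra.lift_ι_apply _ _, hG i]
      | mul a b ha hb =>
        rw [map_mul, RingCon.coe_mul, ha, hb, RingCon.coe_mul, map_mul]
      | add a b ha hb =>
        rw [map_add, RingCon.coe_add, ha, hb, RingCon.coe_add, map_add]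
    refine ⟨F, G, ?_, ?_, ?_, ?_⟩
    · intro n X hX q hq
      rw [← eval_subst]
      refine hX _ ?_
      rw [← coe_zero_iff (K := J), keyF q, coe_zero_iff.mpr hq, map_zero]
    · intro n X hX q hq
      rw [← eval_subst]
      refine hX _ ?_
      rw [← coe_zero_iff (K := I), keyG q, coe_zero_iff.mpr hq, map_zero]
    · intro n X hX
      funext i
      rw [← eval_subst]
      have hmem : subst F (G i) - FreeAlgebra.ι ℂ i ∈ J := by
        rw [← coe_eq_coe, keyF (G i), hG i, RingEquiv.apply_symm_apply]
      have h0 := hX _ hmem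
      rw [eval_sub, sub_eq_zero] at h0
      rw [h0, eval_ι]
    · intro n X hX
      funext i
      rw [← eval_subst]
      have hmem : subst G (F i) - FreeAlgebra.ι ℂ i ∈ I := by
        rw [← coe_eq_coe, keyG (F i), hF i, RingEquiv.symm_apply_apply]
      have h0 := hX _ hmem
      rw [eval_sub, sub_eq_zero] at h0
      rw [h0, eval_ι]
  · rintro ⟨F, G, hF, hG, hGF, hFG⟩
    have hΦ : ∀ q ∈ I, subst F q ∈ J := fun q hq =>
      mem_of_vanishing hJ (fun n X hX => by
        rw [eval_subst]; exact hF n X hX q hq)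
    have hΨ : ∀ q ∈ J, subst G q ∈ I := fun q hq =>
      mem_of_vanishing hI (fun n X hX => by
        rw [eval_subst]; exact hG n X hX q hq)
    have hΨΦ : ∀ a : FA d, subst G (subst F a) - a ∈ I := fun a =>
      mem_of_vanishing hI (fun n X hX => by
        rw [eval_sub, eval_subst, eval_subst, hFG n X hX, sub_self])
    have hΦΨ : ∀ a : FA d, subst F (subst G a) - a ∈ J := fun a =>
      mem_of_vanishing hJ (fun n X hX => by
        rw [eval_sub, eval_subst, eval_subst, hGF n X hX, sub_self])
    refine ⟨(RingEquiv.ofRingHom (qmap J I (subst G) hΨ) (qmap I J (subst F) hΦ) ?_ ?_).symm, ?_⟩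
    · apply RingHom.ext
      intro y
      refine Quotient.inductionOn y (fun a => ?_)
      show ((subst G (subst F a) : FA d) : I.ringCon.Quotient) = (a : I.ringCon.Quotient)
      rw [coe_eq_coe]
      exact hΨΦ a
    · apply RingHom.ext
      intro y
      refine Quotient.inductionOn y (fun a => ?_)
      show ((subst F (subst G a) : FA d) : J.ringCon.Quotient) = (a : J.ringCon.Quotient)
      rw [coe_eq_coe]
      exact hΦΨ a
    · intro c
      show ((subst F (algebraMap ℂ (FA d) c) : FA d) : J.ringCon.Quotient) = _
      rw [(subst F).commutes c]

end
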